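/- Let f : ℝ → ℝ be continuous and let x : ℝ → ℝ be differentiable with x'(t) = f(x(t)) for all t ∈ ℝ. Then x is monotone: either x(s) ≤ x(t) for all s ≤ t, or x(s) ≥ x(t) for all s ≤ t. -/

import Mathlib

open Set Filter Topology

/-- Core lemma: if `f (x t₀) > 0` then `x t₀ < x t₁` for all `t₁ > t₀`. -/
lemma aux_pos_fwd (f : ℝ → ℝ) (x : ℝ → ℝ)
    (hode : ∀ t : ℝ, HasDerivAt x (f (x t)) t) (t₀ : ℝ) (hpos : 0 < f (x t₀))
    (t₁ : ℝ) (ht : t₀ < t₁) : x t₀ < x t₁ := by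
  by_contra hle
  push_neg at hle
  have hcont : Continuous x := by
    apply continuous_iff_continuousAt.mpr
    exact fun s => (hode s).continuousAt
  -- slope positivity near t₀ from the right
  have hslope : Tendsto (slope x t₀) (𝓝[≠] t₀) (𝓝 (f (x t₀))) :=
    hasDerivAt_iff_tendsto_slope.mp (hode t₀)
  have hmono : (𝓝[>] t₀ : Filter ℝ) ≤ 𝓝[≠] t₀ :=
    nhdsWithin_mono t₀ fun s hs => ne_of_gt hs
  have hev : ∀ᶠ s in 𝓝[>] t₀, 0 < slope x t₀ s :=
    (hslope.mono_left hmono).eventually (eventually_gt_nhds hpos)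
  have hev' : ∀ᶠ s in 𝓝[>] t₀, x t₀ < x s := by
    filter_upwards [hev, self_mem_nhdsWithin] with s hs hs'
    have h1 : 0 < s - t₀ := sub_pos.mpr hs'
    have : 0 < x s - x t₀ := by
      have := mul_pos hs h1
      rw [slope_def_field, div_mul_cancel₀] at this
      · linarith
      · exact ne_of_gt h1
    linarith
  obtain ⟨u, hu, huIoc⟩ := mem_nhdsGT_iff_exists_Ioc_subset.mp hev'
  -- shrink u to be ≤ t₁
  set u' : ℝ := min u t₁ with hu'def
  have hu'₀ : t₀ < u' := lt_min hu ht
  have hu't₁ : u' ≤ t₁ := min_le_right _ _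
  have hIoc : ∀ s ∈ Ioc t₀ u', x t₀ < x s := fun s hs =>
    huIoc ⟨hs.1, hs.2.trans (min_le_left _ _)⟩
  -- the set where x dips back to x t₀
  set S : Set ℝ := {t | t ∈ Icc u' t₁ ∧ x t ≤ x t₀} with hSdef
  have hSclosed : IsClosed S := by
    have : S = Icc u' t₁ ∩ x ⁻¹' Iic (x t₀) := rfl
    rw [this]
    exact isClosed_Icc.inter (isClosed_Iic.preimage hcont)
  have hSne : S.Nonempty := ⟨t₁, ⟨hu't₁, le_refl _⟩, hle⟩
  have hSbdd : BddBelow S := ⟨u', fun s hs => hs.1.1⟩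
  set τ : ℝ := sInf S with hτdef
  have hτS : τ ∈ S := hSclosed.csInf_mem hSne hSbdd
  have hτu' : u' ≤ τ := hτS.1.1
  have hτ₀ : t₀ < τ := hu'₀.trans_le hτu'
  -- below τ (and above t₀), x is strictly above x t₀
  have hbelow : ∀ s ∈ Ioo t₀ τ, x t₀ < x s := by
    rintro s ⟨hs₀, hsτ⟩
    rcases le_or_gt s u' with h | h
    · exact hIoc s ⟨hs₀, h⟩
    · by_contra hcon
      push_neg at hcon
      have hsS : s ∈ S := ⟨⟨h.le, hsτ.le.trans hτS.1.2⟩, hcon⟩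
      exact absurd (csInf_le hSbdd hsS) (not_le.mpr hsτ)
  -- x τ = x t₀ by continuity from the left
  have hne : (𝓝[<] τ : Filter ℝ).NeBot := nhdsLT_neBot τ
  have hxτge : x t₀ ≤ x τ := by
    have htend : Tendsto x (𝓝[<] τ) (𝓝 (x τ)) :=
      (hcont.tendsto τ).mono_left nhdsWithin_le_nhds
    have hevl : ∀ᶠ s in 𝓝[<] τ, x t₀ ≤ x s := by
      filter_upwards [Ioo_mem_nhdsLT_of_mem (⟨hτ₀, le_refl τ⟩ : τ ∈ Ioc t₀ τ)]
        with s hs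
      exact (hbelow s hs).le
    exact ge_of_tendsto htend hevl
  have hxτ : x τ = x t₀ := le_antisymm hτS.2 hxτge
  -- slope at τ from the left is negative, but tends to f (x τ) > 0
  have hposτ : 0 < f (x τ) := by rw [hxτ]; exact hpos
  have hslopeτ : Tendsto (slope x τ) (𝓝[≠] τ) (𝓝 (f (x τ))) :=
    hasDerivAt_iff_tendsto_slope.mp (hode τ)
  have hmonoτ : (𝓝[<] τ : Filter ℝ) ≤ 𝓝[≠] τ :=
    nhdsWithin_mono τ fun s hs => ne_of_lt hs
  have hevτ : ∀ᶠ s in 𝓝[<] τ, 0 < slope x τ s :=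
    (hslopeτ.mono_left hmonoτ).eventually (eventually_gt_nhds hposτ)
  have hevτ' : ∀ᶠ s in 𝓝[<] τ, slope x τ s < 0 := by
    filter_upwards [Ioo_mem_nhdsLT_of_mem (⟨hτ₀, le_refl τ⟩ : τ ∈ Ioc t₀ τ)]
      with s hs
    have h1 : x s - x τ > 0 := by
      have := hbelow s hs
      rw [hxτ]; linarith
    have h2 : s - τ < 0 := sub_neg.mpr hs.2
    rw [slope_def_field]
    exact div_neg_of_pos_of_neg h1 h2
  obtain ⟨s, hs1, hs2⟩ := (hevτ.and hevτ').exists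
  linarith

/-- If `f (x t₀) < 0` then `x t₁ < x t₀` for all `t₁ > t₀`. -/
lemma aux_neg_fwd (f : ℝ → ℝ) (x : ℝ → ℝ)
    (hode : ∀ t : ℝ, HasDerivAt x (f (x t)) t) (t₀ : ℝ) (hneg : f (x t₀) < 0)
    (t₁ : ℝ) (ht : t₀ < t₁) : x t₁ < x t₀ := by
  have hode' : ∀ t : ℝ, HasDerivAt (fun s => -x s) ((fun u => -f (-u)) ((fun s => -x s) t)) t := by
    intro t
    have := (hode t).neg
    simp only [neg_neg]; exact this
  have := aux_pos_fwd (fun u => -f (-u)) (fun s => -x s) hode' t₀ (by simpa using hneg) t₁ ht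
  simpa using this

/-- If `f (x t₀) > 0` then `x t₁ < x t₀` for all `t₁ < t₀`. -/
lemma aux_pos_bwd (f : ℝ → ℝ) (x : ℝ → ℝ)
    (hode : ∀ t : ℝ, HasDerivAt x (f (x t)) t) (t₀ : ℝ) (hpos : 0 < f (x t₀))
    (t₁ : ℝ) (ht : t₁ < t₀) : x t₁ < x t₀ := by
  have hode' : ∀ t : ℝ, HasDerivAt (fun s => x (-s)) ((fun u => -f u) ((fun s => x (-s)) t)) t := by
    intro t
    have h := (hode (-t)).comp t (hasDerivAt_neg t)
    rw [mul_neg_one] at h; exact h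
  have := aux_neg_fwd (fun u => -f u) (fun s => x (-s)) hode' (-t₀)
    (by simpa using hpos) (-t₁) (by linarith)
  simpa using this

/-- If `f (x t₀) < 0` then `x t₀ < x t₁` for all `t₁ < t₀`. -/
lemma aux_neg_bwd (f : ℝ → ℝ) (x : ℝ → ℝ)
    (hode : ∀ t : ℝ, HasDerivAt x (f (x t)) t) (t₀ : ℝ) (hneg : f (x t₀) < 0)
    (t₁ : ℝ) (ht : t₁ < t₀) : x t₀ < x t₁ := by
  have hode' : ∀ t : ℝ, HasDerivAt (fun s => x (-s)) ((fun u => -f u) ((fun s => x (-s)) t)) t := by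
    intro t
    have h := (hode (-t)).comp t (hasDerivAt_neg t)
    rw [mul_neg_one] at h; exact h
  have := aux_pos_fwd (fun u => -f u) (fun s => x (-s)) hode' (-t₀)
    (by simpa using hneg) (-t₁) (by linarith)
  simpa using this

/-- Solutions of scalar autonomous ODEs are monotone. -/
theorem stmt_4 (f : ℝ → ℝ) (hf : Continuous f) (x : ℝ → ℝ)
    (hode : ∀ t : ℝ, HasDerivAt x (f (x t)) t) :
    Monotone x ∨ Antitone x := by
  have hdiff : Differentiable ℝ x := fun t => (hode t).differentiableAt
  have hderiv : ∀ t, deriv x t = f (x t) := fun t => (hode t).deriv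
  by_cases h : ∀ t, 0 ≤ f (x t)
  · left
    exact monotone_of_deriv_nonneg hdiff fun t => (hderiv t).symm ▸ h t
  · push_neg at h
    obtain ⟨t₁, ht₁⟩ := h
    right
    have hnonpos : ∀ t, f (x t) ≤ 0 := by
      intro t₀
      by_contra hcon
      push_neg at hcon
      rcases lt_trichotomy t₀ t₁ with hlt | heq | hgt
      · have h1 := aux_pos_fwd f x hode t₀ hcon t₁ hlt
        have h2 := aux_neg_bwd f x hode t₁ ht₁ t₀ hlt
        linarith
      · rw [heq] at hcon; linarith
      · have h1 := aux_neg_fwd f x hode t₁ ht₁ t₀ hgt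
        have h2 := aux_pos_bwd f x hode t₀ hcon t₁ hgt
        linarith
    exact antitone_of_deriv_nonpos hdiff fun t => (hderiv t).symm ▸ hnonpos t
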